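/- Let G be a connected simple graph on a nonempty finite vertex set S of cardinality K, with real Laplacian matrix L. For every initial vector y₀ : S → ℝ, the solution of the linear consensus dynamics ẏ = −L y, given by y(t) = exp(−t L) · y₀ (matrix exponential applied by matrix-vector product), converges as t → ∞ to the consensus vector whose every component equals the average (1/K) Σ_{k∈S} (y₀)_k. -/

import Mathlib

open NormedSpace
open scoped Matrix

lemma exp_mulVec_eigen' {V : Type*} [Fintype V] [DecidableEq V]
    (A : Matrix V V ℝ) (v : V → ℝ) (μ : ℝ) (h : A *ᵥ v = μ • v) :
    exp A *ᵥ v = Real.exp μ • v := by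
  letI : NormedRing (Matrix V V ℝ) := Matrix.linftyOpNormedRing
  letI : NormedAlgebra ℝ (Matrix V V ℝ) := Matrix.linftyOpNormedAlgebra
  have hpow : ∀ k : ℕ, A ^ k *ᵥ v = μ ^ k • v := by
    intro k; induction k with
    | zero => simp
    | succ k ih =>
      rw [pow_succ, ← Matrix.mulVec_mulVec, h, Matrix.mulVec_smul, ih, smul_smul, pow_succ,
        mul_comm]
  let f : Matrix V V ℝ →ₗ[ℝ] (V → ℝ) :=
    { toFun := fun M => M *ᵥ v
      map_add' := fun M N => Matrix.add_mulVec M N v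
      map_smul' := fun r M => by simp [Matrix.smul_mulVec] }
  have hc : Continuous f := LinearMap.continuous_of_finiteDimensional f
  let F : Matrix V V ℝ →L[ℝ] (V → ℝ) := ⟨f, hc⟩
  have hsum : Summable fun k : ℕ => ((Nat.factorial k : ℕ) : ℝ)⁻¹ • A ^ k :=
    NormedSpace.expSeries_summable' A
  have h1 : exp A *ᵥ v = F (exp A) := rfl
  rw [h1, NormedSpace.exp_eq_tsum ℝ, F.map_tsum hsum]
  have h2 : ∀ k : ℕ, F (((Nat.factorial k : ℕ) : ℝ)⁻¹ • A ^ k) = (((Nat.factorial k : ℕ) : ℝ)⁻¹ * μ ^ k) • v := by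
    intro k
    show (((Nat.factorial k : ℕ) : ℝ)⁻¹ • A ^ k) *ᵥ v = _
    rw [Matrix.smul_mulVec, hpow, smul_smul]
  simp_rw [h2]
  rw [Summable.tsum_smul_const]
  · congr 1
    rw [Real.exp_eq_exp_ℝ, NormedSpace.exp_eq_tsum ℝ]
    simp [smul_eq_mul]
  · simpa [smul_eq_mul] using NormedSpace.expSeries_summable' (𝕂 := ℝ) μ

/-- For a connected simple graph on a nonempty finite vertex set, the solution
`y(t) = exp(-t L) y₀` of the consensus dynamics `ẏ = -L y` converges, as
`t → ∞`, to the consensus vector all of whose entries equal the average of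
the initial entries. -/
theorem stmt_9 {V : Type*} [Fintype V] [DecidableEq V] [Nonempty V]
    (G : SimpleGraph V) [DecidableRel G.Adj]
    (hconn : G.Connected) (y₀ : V → ℝ) :
    Filter.Tendsto
      (fun t : ℝ => exp (-(t • G.lapMatrix ℝ)) *ᵥ y₀)
      Filter.atTop
      (nhds (fun _ : V => (∑ k, y₀ k) / (Fintype.card V : ℝ))) := by
  classical
  set L := G.lapMatrix ℝ with hLdef
  have hps : L.PosSemidef := G.posSemidef_lapMatrix ℝ
  have hherm : L.IsHermitian := hps.1
  set b := hherm.eigenvectorBasis with hb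
  set v : V → V → ℝ := fun j => ⇑(b j) with hv
  set μ : V → ℝ := fun j => hherm.eigenvalues j with hμ
  have heig : ∀ j, L *ᵥ v j = μ j • v j := fun j => hherm.mulVec_eigenvectorBasis j
  have hμ0 : ∀ j, 0 ≤ μ j := fun j => hps.eigenvalues_nonneg j
  set c : V → ℝ := fun j => ∑ i, v j i * y₀ i with hc
  -- expansion of y₀ in the eigenbasis
  have hexpand : y₀ = ∑ j, c j • v j := by
    have hs := b.sum_repr' (WithLp.toLp 2 y₀)
    have h2 : ∀ j, (inner ℝ (b j) (WithLp.toLp 2 y₀) : ℝ) = c j := by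
      intro j; rw [PiLp.inner_apply]; simp [hc, hv, mul_comm]
    funext i
    have h3 : y₀ i = (∑ j, (inner ℝ (b j) (WithLp.toLp 2 y₀) : ℝ) • b j) i :=
      congrFun (congrArg (fun (x : EuclideanSpace ℝ V) => (x : V → ℝ)) hs.symm) i
    rw [h3]
    simp_rw [h2]
    rw [WithLp.ofLp_sum, Finset.sum_apply, Finset.sum_apply]
    simp [smul_eq_mul, hv]
  -- explicit formula for the solution
  have key : ∀ t : ℝ, exp (-(t • L)) *ᵥ y₀
      = ∑ j, (Real.exp (-(t * μ j)) * c j) • v j := by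
    intro t
    have h1 : ∀ j, exp (-(t • L)) *ᵥ v j = Real.exp (-(t * μ j)) • v j := by
      intro j
      apply exp_mulVec_eigen'
      rw [Matrix.neg_mulVec, Matrix.smul_mulVec, heig, smul_smul, ← neg_smul]
    calc exp (-(t • L)) *ᵥ y₀ = ∑ j, c j • (exp (-(t • L)) *ᵥ v j) := by
          rw [hexpand, ← Matrix.mulVecLin_apply, map_sum]
          simp [Matrix.mulVecLin_apply, Matrix.mulVec_smul]
      _ = ∑ j, (Real.exp (-(t * μ j)) * c j) • v j := by
          simp_rw [h1, smul_smul, mul_comm]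
  -- the limit vector
  set w : V → ℝ := ∑ j, (if μ j = 0 then c j else 0) • v j with hw
  have htend : Filter.Tendsto (fun t : ℝ => exp (-(t • L)) *ᵥ y₀)
      Filter.atTop (nhds w) := by
    simp_rw [key, hw]
    apply tendsto_finset_sum
    intro j _
    by_cases hj : μ j = 0
    · simpa [hj] using (tendsto_const_nhds :
        Filter.Tendsto (fun _ : ℝ => c j • v j) Filter.atTop (nhds (c j • v j)))
    · have hjpos : 0 < μ j := lt_of_le_of_ne (hμ0 j) (Ne.symm hj)
      have h0 : Filter.Tendsto (fun t : ℝ => Real.exp (-(t * μ j)) * c j)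
          Filter.atTop (nhds 0) := by
        have : Filter.Tendsto (fun t : ℝ => -(t * μ j)) Filter.atTop Filter.atBot := by
          apply Filter.tendsto_neg_atBot_iff.mpr
          exact Filter.Tendsto.atTop_mul_const hjpos Filter.tendsto_id
        simpa using (Real.tendsto_exp_atBot.comp this).mul_const (c j)
      simpa [hj] using h0.smul_const (v j)
  -- identify w with the average vector
  have hLw : L *ᵥ w = 0 := by
    rw [hw, ← Matrix.mulVecLin_apply, map_sum]
    apply Finset.sum_eq_zero
    intro j _
    rw [Matrix.mulVecLin_apply, Matrix.mulVec_smul, heig, smul_smul]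
    by_cases hj : μ j = 0 <;> simp [hj]
  have hwconst : ∀ i k : V, w i = w k := by
    have := G.lapMatrix_mulVec_eq_zero_iff_forall_reachable.mp hLw
    intro i k; exact this i k (hconn.preconnected i k)
  -- sums of eigenvectors with nonzero eigenvalue vanish
  have hones : ∀ j, μ j ≠ 0 → ∑ i, v j i = 0 := by
    intro j hj
    have h1 : (fun _ : V => (1:ℝ)) ⬝ᵥ (L *ᵥ v j) = 0 := by
      rw [Matrix.dotProduct_mulVec]
      have : (fun _ : V => (1:ℝ)) ᵥ* L = 0 := by
        rw [← Matrix.mulVec_transpose]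
        rw [(G.isSymm_lapMatrix ℝ).eq]
        exact G.lapMatrix_mulVec_const_eq_zero
      rw [this, zero_dotProduct]
    rw [heig, dotProduct_smul] at h1
    have h2 : (fun _ : V => (1:ℝ)) ⬝ᵥ v j = ∑ i, v j i := by
      simp [dotProduct]
    rw [h2] at h1
    exact (mul_eq_zero.mp h1).resolve_left hj
  have hsumw : ∑ k, w k = ∑ k, y₀ k := by
    have hy : ∑ k, y₀ k = ∑ j, c j * ∑ i, v j i := by
      rw [hexpand]
      simp_rw [Finset.sum_apply, Pi.smul_apply, smul_eq_mul, Finset.mul_sum]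
      rw [Finset.sum_comm]
    have hwk : ∑ k, w k = ∑ j, (if μ j = 0 then c j else 0) * ∑ i, v j i := by
      rw [hw]
      simp_rw [Finset.sum_apply, Pi.smul_apply, smul_eq_mul, Finset.mul_sum]
      rw [Finset.sum_comm]
    rw [hwk, hy]
    apply Finset.sum_congr rfl
    intro j _
    by_cases hj : μ j = 0
    · simp [hj]
    · simp [hj, hones j hj]
  have hwval : w = fun _ : V => (∑ k, y₀ k) / (Fintype.card V : ℝ) := by
    funext i
    have hK : (Fintype.card V : ℝ) ≠ 0 := by
      exact_mod_cast Fintype.card_ne_zero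
    rw [eq_div_iff hK]
    calc w i * (Fintype.card V : ℝ) = ∑ _k : V, w i := by
          simp [mul_comm]
      _ = ∑ k, w k := Finset.sum_congr rfl (fun k _ => hwconst i k)
      _ = ∑ k, y₀ k := hsumw
  rw [← hwval]
  exact htend
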